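/- Let (X_r) be any sequence with X_r = ±1, Δx > 0, a ∈ ℝ, and S_0 = a, S_n = a + (X_1 + ... + X_n)Δx. For any f : ℝ → ℝ and n ≥ 1, the trapezoidal sum of f from S_0 to S_n with step Δx equals Σ_{r=1}^{n} f(S_{r-1}) X_r Δx + (1/2) Σ_{r=1}^{n} ((f(S_r) − f(S_{r-1}))/(X_r Δx)) (Δx)^2 (discrete Itô formula). -/
import Mathlib


open scoped Classical
open Finset

noncomputable section

/-- Partial sums `S_n = a + (X_1 + ... + X_n) Δx` of a `±1` sequence. -/
def walk (a dx : ℝ) (X : ℕ → ℤ) (n : ℕ) : ℝ :=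
  a + ((∑ i ∈ Finset.range n, X i : ℤ) : ℝ) * dx

/-- Trapezoidal sum `T_{x=a}^{a + k Δx} f(x) Δx`. -/
def trapSum (f : ℝ → ℝ) (a dx : ℝ) (k : ℤ) : ℝ :=
  (k.sign : ℝ) * dx *
    (f a / 2 +
      (∑ j ∈ Finset.range (k.natAbs - 1), f (a + (k.sign : ℝ) * ((j : ℝ) + 1) * dx)) +
      f (a + (k : ℝ) * dx) / 2)

lemma trapSum_zero (f : ℝ → ℝ) (a dx : ℝ) : trapSum f a dx 0 = 0 := by simp [trapSum]

lemma trapSum_pos (f : ℝ → ℝ) (a dx : ℝ) (m : ℕ) :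
    trapSum f a dx ((m : ℤ) + 1) =
      dx * (f a / 2 + (∑ j ∈ Finset.range m, f (dx + dx * (j : ℝ) + a))
        + f (dx + dx * (m : ℝ) + a) / 2) := by
  have h1 : ((m : ℤ) + 1).sign = 1 := Int.sign_eq_one_of_pos (by omega)
  have h2 : ((m : ℤ) + 1).natAbs - 1 = m := by omega
  simp only [trapSum, h1, h2, Int.cast_one, one_mul]
  push_cast
  rw [show a + ((m : ℝ) + 1) * dx = dx + dx * (m : ℝ) + a by ring]
  ring_nf
lemma trapSum_neg (f : ℝ → ℝ) (a dx : ℝ) (m : ℕ) :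
    trapSum f a dx (-((m : ℤ) + 1)) =
      -(dx * (f a / 2 + (∑ j ∈ Finset.range m, f (-dx - dx * (j : ℝ) + a))
        + f (-dx - dx * (m : ℝ) + a) / 2)) := by
  have h1 : (-((m : ℤ) + 1)).sign = -1 := Int.sign_eq_neg_one_of_neg (by omega)
  have h2 : (-((m : ℤ) + 1)).natAbs - 1 = m := by omega
  simp only [trapSum, h1, h2, Int.cast_neg, Int.cast_one, neg_one_mul]
  push_cast
  rw [show a + -((m : ℝ) + 1) * dx = -dx - dx * (m : ℝ) + a by ring]
  ring_nf

lemma trap_step (f : ℝ → ℝ) (a dx : ℝ) (k : ℤ) :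
    trapSum f a dx (k + 1) =
      trapSum f a dx k + dx * (f (a + (k : ℝ) * dx) + f (a + ((k : ℝ) + 1) * dx)) / 2 := by
  rcases le_or_gt 0 k with hk | hk
  · obtain ⟨m, rfl⟩ : ∃ m : ℕ, k = m := ⟨k.natAbs, by omega⟩
    cases m with
    | zero =>
      rw [show ((0 : ℕ) : ℤ) + 1 = ((0 : ℕ) : ℤ) + 1 from rfl, trapSum_pos f a dx 0]
      push_cast [trapSum_zero]
      rw [show a + (0 : ℝ) * dx = a by ring, show a + ((0 : ℝ) + 1) * dx = dx + dx * (0:ℝ) + a by ring]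
      ring_nf
    | succ m =>
      rw [trapSum_pos f a dx (m + 1),
        show ((m + 1 : ℕ) : ℤ) = (m : ℤ) + 1 by push_cast; ring,
        trapSum_pos f a dx m, Finset.sum_range_succ]
      push_cast
      rw [show a + ((m : ℝ) + 1) * dx = dx + dx * (m : ℝ) + a by ring,
        show dx + dx * ((m : ℝ) + 1) + a = a + ((m : ℝ) + 1 + 1) * dx by ring]
      ring_nf
  · obtain ⟨m, rfl⟩ : ∃ m : ℕ, k = -((m : ℤ) + 1) := ⟨(-k-1).toNat, by omega⟩
    cases m with
    | zero =>
      rw [show -(((0 : ℕ) : ℤ) + 1) + 1 = 0 by ring, trapSum_zero, trapSum_neg f a dx 0]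
      push_cast
      rw [show a + (-1 : ℝ) * dx = -dx - dx * (0:ℝ) + a by ring,
        show a + ((-1 : ℝ) + 1) * dx = a by ring]
      ring_nf
    | succ m =>
      rw [show -(((m + 1 : ℕ) : ℤ) + 1) + 1 = -((m : ℤ) + 1) by push_cast; ring,
        trapSum_neg f a dx m, trapSum_neg f a dx (m + 1), Finset.sum_range_succ]
      push_cast
      rw [show -dx - dx * ((m : ℝ) + 1) + a = a + -((m : ℝ) + 1 + 1) * dx by ring,
        show a + (-((m : ℝ) + 1 + 1) + 1) * dx = -dx - dx * (m : ℝ) + a by ring]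
      ring_nf

lemma ito_aux (f : ℝ → ℝ) (a dx : ℝ) (hdx : 0 < dx)
    (X : ℕ → ℤ) (hX : ∀ r, X r = 1 ∨ X r = -1) (n : ℕ) :
    trapSum f a dx (∑ i ∈ Finset.range n, X i) =
      (∑ r ∈ Finset.range n, f (walk a dx X r) * ((X r : ℝ) * dx)) +
      (1 / 2) * ∑ r ∈ Finset.range n,
        (f (walk a dx X (r + 1)) - f (walk a dx X r)) / ((X r : ℝ) * dx) * dx ^ 2 := by
  have hdx' : dx ≠ 0 := ne_of_gt hdx
  induction n with
  | zero => simp [trapSum_zero]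
  | succ n ih =>
    set k : ℤ := ∑ i ∈ Finset.range n, X i with hk
    have hsum : ∑ i ∈ Finset.range (n + 1), X i = k + X n := by
      rw [Finset.sum_range_succ]
    have hw1 : walk a dx X n = a + (k : ℝ) * dx := by rw [walk]
    rw [hsum, Finset.sum_range_succ, Finset.sum_range_succ (n := n)]
    rcases hX n with h | h
    · have hw2 : walk a dx X (n + 1) = a + ((k : ℝ) + 1) * dx := by
        rw [walk, Finset.sum_range_succ, h, ← hk]; push_cast; ring
      have hterm : ∀ u v : ℝ, (u - v) / (((1 : ℤ) : ℝ) * dx) * dx ^ 2 = (u - v) * dx := by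
        intro u v
        rw [show ((1 : ℤ) : ℝ) * dx = dx by push_cast; ring,
          div_mul_eq_mul_div, div_eq_iff hdx']
        ring
      rw [h, trap_step, ih, hw1, hw2, hterm]
      push_cast
      ring
    · have hw2 : walk a dx X (n + 1) = a + ((k : ℝ) - 1) * dx := by
        rw [walk, Finset.sum_range_succ, h, ← hk]; push_cast; ring
      have hterm : ∀ u v : ℝ, (u - v) / (((-1 : ℤ) : ℝ) * dx) * dx ^ 2 = (v - u) * dx := by
        intro u v
        rw [show ((-1 : ℤ) : ℝ) * dx = -dx by push_cast; ring,
          div_mul_eq_mul_div, div_eq_iff (neg_ne_zero.mpr hdx')]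
        ring
      have hstep := trap_step f a dx (k - 1)
      rw [sub_add_cancel] at hstep
      have h2 : trapSum f a dx (k - 1) =
          trapSum f a dx k -
            dx * (f (a + ((k : ℝ) - 1) * dx) + f (a + (k : ℝ) * dx)) / 2 := by
        push_cast at hstep
        rw [show ((k : ℝ) - 1) + 1 = (k : ℝ) by ring] at hstep
        linarith
      rw [h, show k + (-1) = k - 1 by ring, h2, ih, hw1, hw2, hterm]
      push_cast
      ring

/-- One-sided (up) discrete local time `L^+(n,x)`. -/
def locPlus (a dx : ℝ) (X : ℕ → ℤ) (n : ℕ) (x : ℝ) : ℝ :=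
  dx * ((Finset.range n).filter
    (fun j => walk a dx X j = x ∧ walk a dx X (j + 1) = x + dx)).card

/-- One-sided (down) discrete local time `L^-(n,x)`. -/
def locMinus (a dx : ℝ) (X : ℕ → ℤ) (n : ℕ) (x : ℝ) : ℝ :=
  dx * ((Finset.range n).filter
    (fun j => walk a dx X j = x ∧ walk a dx X (j + 1) = x - dx)).card

/-- Discrete Itô formula. -/
theorem discrete_ito (f : ℝ → ℝ) (a dx : ℝ) (hdx : 0 < dx)
    (X : ℕ → ℤ) (hX : ∀ r, X r = 1 ∨ X r = -1) (n : ℕ) (hn : 1 ≤ n) :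
    trapSum f a dx (∑ i ∈ Finset.range n, X i) =
      (∑ r ∈ Finset.range n, f (walk a dx X r) * ((X r : ℝ) * dx)) +
      (1 / 2) * ∑ r ∈ Finset.range n,
        (f (walk a dx X (r + 1)) - f (walk a dx X r)) / ((X r : ℝ) * dx) * dx ^ 2 :=
  ito_aux f a dx hdx X hX n
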